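/- The rational number 𝔬 := α·|e| is a positive integer, s_{l+α} = s_l + 𝔬 for every integer l ≥ 0, and consequently every integer l > α + γ satisfies s_l ≥ 0. -/

import Mathlib

open scoped BigOperators

/-- `s_l := l·b₀ − Σ_i ⌈l·ω_i/α_i⌉`. -/
noncomputable def sVal (ν : ℕ) (b0 : ℤ) (α ω : Fin ν → ℤ) (l : ℤ) : ℤ :=
  l * b0 - ∑ i, ⌈((l * ω i : ℤ) : ℚ) / (α i : ℚ)⌉

/-- The rational number `𝔬 := α·|e|` is a positive integer, `s_{l+α} = s_l + 𝔬` for every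
integer `l ≥ 0`, and consequently every integer `l > α + γ` satisfies `s_l ≥ 0`. -/
theorem stmt1 (ν : ℕ) (hν : 3 ≤ ν) (b0 : ℤ) (α ω : Fin ν → ℤ)
    (hω : ∀ i, 0 < ω i) (hωα : ∀ i, ω i < α i) (hcop : ∀ i, Int.gcd (α i) (ω i) = 1)
    (e : ℚ) (he : e = -(b0 : ℚ) + ∑ i, (ω i : ℚ) / (α i : ℚ)) (hneg : e < 0)
    (A : ℤ) (hA : A = Finset.univ.lcm α)
    (γ : ℚ) (hγ : γ = ((ν : ℚ) - 2 - ∑ i, 1 / (α i : ℚ)) / |e|) :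
    ∃ o : ℤ, 0 < o ∧ (o : ℚ) = (A : ℚ) * |e| ∧
      (∀ l : ℤ, 0 ≤ l → sVal ν b0 α ω (l + A) = sVal ν b0 α ω l + o) ∧
      (∀ l : ℤ, (l : ℚ) > (A : ℚ) + γ → 0 ≤ sVal ν b0 α ω l) := by
  have hαpos : ∀ i, 0 < α i := fun i => (hω i).trans (hωα i)
  have hαQ : ∀ i, (0 : ℚ) < (α i : ℚ) := fun i => by exact_mod_cast hαpos i
  have hdvd : ∀ i, α i ∣ A := by
    intro i; rw [hA]; exact Finset.dvd_lcm (Finset.mem_univ i)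
  have hAne : A ≠ 0 := by
    rw [hA]
    intro h
    rw [Finset.lcm_eq_zero_iff] at h
    obtain ⟨i, _, hi⟩ := h
    exact (hαpos i).ne' (by simpa using hi)
  have hAnn : 0 ≤ A := by
    have h1 : normalize A = A := by rw [hA]; exact Finset.normalize_lcm
    have h2 : |A| = A := by rw [Int.abs_eq_normalize]; exact h1
    rw [← h2]; exact abs_nonneg A
  have hA0 : 0 < A := lt_of_le_of_ne hAnn (Ne.symm hAne)
  have hAQ : (0 : ℚ) < (A : ℚ) := by exact_mod_cast hA0
  have hkey : ∀ i, ((A / α i : ℤ) : ℚ) = (A : ℚ) / (α i : ℚ) := by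
    intro i
    obtain ⟨k, hk⟩ := hdvd i
    have h1 : A / α i = k := by rw [hk]; exact Int.mul_ediv_cancel_left k (hαpos i).ne'
    rw [h1, hk]
    push_cast
    rw [mul_comm, mul_div_assoc, div_self (hαQ i).ne', mul_one]
  have habs : |e| = -e := abs_of_neg hneg
  have hepos : (0 : ℚ) < |e| := abs_pos.mpr hneg.ne
  set o : ℤ := A * b0 - ∑ i, A / α i * ω i with ho
  have hcast : (o : ℚ) = (A : ℚ) * |e| := by
    rw [ho, habs, he]
    push_cast
    rw [Finset.sum_congr rfl (fun i (_ : i ∈ Finset.univ) => by rw [hkey i])]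
    have hs : ∑ i, (A : ℚ) / (α i : ℚ) * (ω i : ℚ) = (A : ℚ) * ∑ i, (ω i : ℚ) / (α i : ℚ) := by
      rw [Finset.mul_sum]
      exact Finset.sum_congr rfl (fun i _ => by ring)
    rw [hs]
    ring
  have hopos : 0 < o := by
    have : (0 : ℚ) < (o : ℚ) := by rw [hcast]; exact mul_pos hAQ hepos
    exact_mod_cast this
  refine ⟨o, hopos, hcast, ?_, ?_⟩
  · intro l _
    unfold sVal
    have hceil : ∀ i : Fin ν, ⌈(((l + A) * ω i : ℤ) : ℚ) / (α i : ℚ)⌉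
        = ⌈((l * ω i : ℤ) : ℚ) / (α i : ℚ)⌉ + A / α i * ω i := by
      intro i
      have harg : (((l + A) * ω i : ℤ) : ℚ) / (α i : ℚ)
          = ((l * ω i : ℤ) : ℚ) / (α i : ℚ) + ((A / α i * ω i : ℤ) : ℚ) := by
        push_cast
        rw [hkey i]
        field_simp
      rw [harg, Int.ceil_add_intCast]
    rw [Finset.sum_congr rfl (fun i (_ : i ∈ Finset.univ) => hceil i), Finset.sum_add_distrib, ho]
    ring
  · intro l hl
    have hbound : ∀ i : Fin ν, (⌈(l : ℚ) * (ω i : ℚ) / (α i : ℚ)⌉ : ℚ)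
        ≤ (l : ℚ) * (ω i : ℚ) / (α i : ℚ) + 1 - 1 / (α i : ℚ) := by
      intro i
      set c := ⌈(l : ℚ) * (ω i : ℚ) / (α i : ℚ)⌉ with hc
      have h1 : (c : ℚ) < (l : ℚ) * (ω i : ℚ) / (α i : ℚ) + 1 := Int.ceil_lt_add_one _
      have h2 : (c : ℚ) * (α i : ℚ) < (l : ℚ) * (ω i : ℚ) + (α i : ℚ) := by
        have := mul_lt_mul_of_pos_right h1 (hαQ i)
        rwa [add_mul, one_mul, div_mul_cancel₀ _ (hαQ i).ne'] at this
      have h3 : c * α i < l * ω i + α i := by exact_mod_cast h2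
      have h4 : c * α i ≤ l * ω i + α i - 1 := by omega
      have h5 : (c : ℚ) * (α i : ℚ) ≤ (l : ℚ) * (ω i : ℚ) + (α i : ℚ) - 1 := by
        exact_mod_cast h4
      calc (c : ℚ) = (c : ℚ) * (α i : ℚ) / (α i : ℚ) := by
              rw [mul_div_cancel_right₀ _ (hαQ i).ne']
        _ ≤ ((l : ℚ) * (ω i : ℚ) + (α i : ℚ) - 1) / (α i : ℚ) := (div_le_div_iff_of_pos_right (hαQ i)).mpr h5
        _ = (l : ℚ) * (ω i : ℚ) / (α i : ℚ) + 1 - 1 / (α i : ℚ) := by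
              rw [sub_div, add_div, div_self (hαQ i).ne']
    have hsum : (((∑ i, ⌈((l * ω i : ℤ) : ℚ) / (α i : ℚ)⌉ : ℤ)) : ℚ)
        ≤ ∑ i, ((l : ℚ) * (ω i : ℚ) / (α i : ℚ) + 1 - 1 / (α i : ℚ)) := by
      push_cast
      exact Finset.sum_le_sum (fun i _ => hbound i)
    have hsplit : ∑ i, ((l : ℚ) * (ω i : ℚ) / (α i : ℚ) + 1 - 1 / (α i : ℚ))
        = (l : ℚ) * (∑ i, (ω i : ℚ) / (α i : ℚ)) + (ν : ℚ) - ∑ i, 1 / (α i : ℚ) := by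
      have h0 : ∀ i : Fin ν, (l : ℚ) * (ω i : ℚ) / (α i : ℚ) + 1 - 1 / (α i : ℚ)
          = (l : ℚ) * ((ω i : ℚ) / (α i : ℚ)) + 1 - 1 / (α i : ℚ) := fun i => by ring
      rw [Finset.sum_congr rfl (fun i (_ : i ∈ Finset.univ) => h0 i), Finset.sum_sub_distrib,
        Finset.sum_add_distrib, ← Finset.mul_sum, Finset.sum_const, Finset.card_univ,
        Fintype.card_fin, nsmul_eq_mul, mul_one]
    have hsQ : ((sVal ν b0 α ω l : ℤ) : ℚ)
        ≥ (l : ℚ) * (b0 : ℚ) - ((l : ℚ) * (∑ i, (ω i : ℚ) / (α i : ℚ)) + (ν : ℚ) - ∑ i, 1 / (α i : ℚ)) := by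
      unfold sVal
      rw [hsplit] at hsum
      push_cast at hsum ⊢
      linarith
    have hle : (l : ℚ) * (b0 : ℚ) - (l : ℚ) * (∑ i, (ω i : ℚ) / (α i : ℚ)) = (l : ℚ) * |e| := by
      rw [habs, he]; ring
    have hγe : γ * |e| = (ν : ℚ) - 2 - ∑ i, 1 / (α i : ℚ) := by
      rw [hγ, div_mul_cancel₀ _ hepos.ne']
    have hAe : (1 : ℚ) ≤ (A : ℚ) * |e| := by
      calc (1 : ℚ) ≤ (o : ℚ) := by exact_mod_cast hopos
        _ = (A : ℚ) * |e| := hcast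
    have hlm : (l : ℚ) * |e| > ((A : ℚ) + γ) * |e| := mul_lt_mul_of_pos_right hl hepos
    have hfin : ((sVal ν b0 α ω l : ℤ) : ℚ) > -1 := by
      have h2 : ((A : ℚ) + γ) * |e| = (A : ℚ) * |e| + γ * |e| := by ring
      rw [h2, hγe] at hlm
      nlinarith [hsQ, hle]
    have : (-1 : ℤ) < sVal ν b0 α ω l := by exact_mod_cast hfin
    omega
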